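/- Generalization bound via population within-class variance: For a K-class classifier f(x) = W g(x) with rows w₁,…,w_K of W, the misclassification probability Pr(argmax_i f(x)_i ≠ y) is at most Σ_{c=1}^K p_Y(c) Σ_{k≠c} (1 + max{⟨μ_c, (w_c−w_k)/‖w_c−w_k‖⟩, 0}² / V_c)^{-1}, where μ_c = E[g(X) | Y=c] and V_c = E[‖g(X) − μ_c‖² | Y=c], assuming w_c ≠ w_k for all k ≠ c. -/

import Mathlib

open MeasureTheory ProbabilityTheory Matrix Finset

lemma cantelli_aux {Ω : Type*} [MeasurableSpace Ω] (ν : Measure Ω) [IsProbabilityMeasure ν]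
    (Z : Ω → ℝ) (hZ : MemLp Z 2 ν) (a V : ℝ) (ha : a = ∫ ω, Z ω ∂ν)
    (hVar : ∫ ω, (Z ω - a) ^ 2 ∂ν ≤ V) :
    (ν {ω | Z ω ≤ 0}).toReal ≤ (1 + max a 0 ^ 2 / V)⁻¹ := by
  have hW : MemLp (fun ω => Z ω - a) 2 ν := hZ.sub (memLp_const a)
  have hV0 : 0 ≤ V := le_trans (integral_nonneg fun ω => sq_nonneg _) hVar
  have htriv : (ν {ω | Z ω ≤ 0}).toReal ≤ 1 := by
    calc (ν {ω | Z ω ≤ 0}).toReal ≤ (ν Set.univ).toReal := by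
          exact ENNReal.toReal_mono (measure_ne_top _ _) (measure_mono (Set.subset_univ _))
      _ = 1 := by simp
  rcases le_or_gt a 0 with hA | hA
  · simpa [max_eq_right hA] using htriv
  rcases eq_or_lt_of_le hV0 with hV | hV
  · simpa [← hV] using htriv
  -- main case
  have hint : Integrable Z ν := hZ.integrable one_le_two
  have hEW : ∫ ω, (Z ω - a) ∂ν = 0 := by
    rw [integral_sub hint (integrable_const a)]
    simp [← ha]
  set u : ℝ := V / a with hu
  have hu0 : 0 < u := div_pos hV hA
  set t : ℝ := a + u with ht
  have ht0 : 0 < t := add_pos hA hu0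
  have hh : MemLp (fun ω => Z ω - a - u) 2 ν := hW.sub (memLp_const u)
  have hhint : Integrable (fun ω => (Z ω - a - u) ^ 2) ν := hh.integrable_sq
  have hWsq : Integrable (fun ω => (Z ω - a) ^ 2) ν := hW.integrable_sq
  have hWint : Integrable (fun ω => Z ω - a) ν := hW.integrable one_le_two
  have hI : ∫ ω, (Z ω - a - u) ^ 2 ∂ν ≤ V + u ^ 2 := by
    have e0 : ∫ ω, (Z ω - a - u) ^ 2 ∂ν
        = ∫ ω, ((Z ω - a) ^ 2 - 2 * u * (Z ω - a) + u ^ 2) ∂ν :=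
      integral_congr_ae (Filter.Eventually.of_forall fun ω => by ring)
    have hi1 : Integrable (fun ω => (Z ω - a) ^ 2 - 2 * u * (Z ω - a)) ν :=
      hWsq.sub (hWint.const_mul (2 * u))
    have e1 : ∫ ω, ((Z ω - a) ^ 2 - 2 * u * (Z ω - a) + u ^ 2) ∂ν
        = ∫ ω, ((Z ω - a) ^ 2 - 2 * u * (Z ω - a)) ∂ν + u ^ 2 := by
      rw [integral_add hi1 (integrable_const _)]
      simp
    have e2 : ∫ ω, ((Z ω - a) ^ 2 - 2 * u * (Z ω - a)) ∂ν
        = ∫ ω, (Z ω - a) ^ 2 ∂ν - 2 * u * ∫ ω, (Z ω - a) ∂ν := by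
      rw [integral_sub hWsq (hWint.const_mul (2 * u)), integral_const_mul]
    rw [e0, e1, e2, hEW]
    simp only [mul_zero, sub_zero]
    linarith
  have hsub : {ω | Z ω ≤ 0} ⊆ {ω | t ^ 2 ≤ (fun ω => (Z ω - a - u) ^ 2) ω} := by
    intro ω hω
    simp only [Set.mem_setOf_eq] at hω ⊢
    have h1 : t ≤ -(Z ω - a - u) := by simp only [ht]; linarith
    calc t ^ 2 ≤ (-(Z ω - a - u)) ^ 2 := by
          apply sq_le_sq' _ h1; linarith
      _ = (Z ω - a - u) ^ 2 := by ring
  have hmark := mul_meas_ge_le_integral_of_nonneg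
    (Filter.Eventually.of_forall fun ω => sq_nonneg (Z ω - a - u)) hhint (t ^ 2)
  have hmono : (ν {ω | Z ω ≤ 0}).toReal ≤ (ν {x | t ^ 2 ≤ (Z x - a - u) ^ 2}).toReal :=
    ENNReal.toReal_mono (measure_ne_top _ _) (measure_mono hsub)
  have hfin : (ν {ω | Z ω ≤ 0}).toReal ≤ (V + u ^ 2) / t ^ 2 := by
    rw [le_div_iff₀ (by positivity)]
    calc (ν {ω | Z ω ≤ 0}).toReal * t ^ 2
        ≤ (ν {x | t ^ 2 ≤ (Z x - a - u) ^ 2}).toReal * t ^ 2 := by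
          apply mul_le_mul_of_nonneg_right hmono (by positivity)
      _ ≤ V + u ^ 2 := by rw [mul_comm]; exact le_trans hmark hI
  refine hfin.trans (le_of_eq ?_)
  rw [max_eq_left hA.le]
  have hane : a ≠ 0 := ne_of_gt hA
  have hVne : V ≠ 0 := ne_of_gt hV
  have haV : a ^ 2 + V ≠ 0 := by positivity
  rw [hu, ht, hu, inv_eq_one_div]
  rw [div_eq_div_iff (by positivity) (by positivity)]
  field_simp
  ring

lemma pair_bound {Ω : Type*} [MeasurableSpace Ω] (ν : Measure Ω) [IsProbabilityMeasure ν]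
    {m : ℕ} (G : Ω → Fin m → ℝ) (hG : ∀ j, MemLp (fun ω => G ω j) 2 ν)
    (u : Fin m → ℝ) (hu : u ≠ 0) (M : Fin m → ℝ) (hM : ∀ j, M j = ∫ ω, G ω j ∂ν)
    (V : ℝ) (hV : V = ∫ ω, ∑ j, (G ω j - M j) ^ 2 ∂ν) :
    (ν {ω | u ⬝ᵥ G ω ≤ 0}).toReal ≤
      (1 + max (M ⬝ᵥ ((Real.sqrt (∑ j, u j ^ 2))⁻¹ • u)) 0 ^ 2 / V)⁻¹ := by
  obtain ⟨j0, hj0⟩ : ∃ j, u j ≠ 0 := Function.ne_iff.mp hu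
  have hS : 0 < ∑ j, u j ^ 2 :=
    Finset.sum_pos' (fun j _ => sq_nonneg _) ⟨j0, Finset.mem_univ _, by positivity⟩
  set S := ∑ j, u j ^ 2 with hSdef
  have hsqrt : 0 < Real.sqrt S := Real.sqrt_pos.mpr hS
  set n := (Real.sqrt S)⁻¹ with hndef
  have hn0 : 0 < n := inv_pos.mpr hsqrt
  have hn2 : n ^ 2 * S = 1 := by
    rw [hndef, inv_pow, Real.sq_sqrt hS.le]
    exact inv_mul_cancel₀ hS.ne'
  set Z := fun ω => ∑ j, n * u j * G ω j with hZdef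
  have hZ : MemLp Z 2 ν := memLp_finset_sum _ fun j _ => (hG j).const_mul (n * u j)
  have hevent : {ω | u ⬝ᵥ G ω ≤ 0} = {ω | Z ω ≤ 0} := by
    ext ω
    simp only [Set.mem_setOf_eq, hZdef, dotProduct]
    rw [show ∑ j, n * u j * G ω j = n * ∑ j, u j * G ω j by
      rw [Finset.mul_sum]; exact Finset.sum_congr rfl fun j _ => by ring]
    constructor
    · intro h; nlinarith
    · intro h; nlinarith
  set a := M ⬝ᵥ (n • u) with hadef
  have hGint : ∀ j, Integrable (fun ω => G ω j) ν := fun j => (hG j).integrable one_le_two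
  have ha : a = ∫ ω, Z ω ∂ν := by
    rw [hZdef, integral_finset_sum _ fun j _ => ((hGint j).const_mul (n * u j))]
    rw [hadef]
    simp only [dotProduct, Pi.smul_apply, smul_eq_mul, integral_const_mul]
    exact Finset.sum_congr rfl fun j _ => by rw [← hM]; ring
  have hDint : Integrable (fun ω => ∑ j, (G ω j - M j) ^ 2) ν :=
    integrable_finset_sum _ fun j _ => ((hG j).sub (memLp_const (M j))).integrable_sq
  have hZa : MemLp (fun ω => Z ω - a) 2 ν := hZ.sub (memLp_const a)
  have hVar : ∫ ω, (Z ω - a) ^ 2 ∂ν ≤ V := by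
    rw [hV]
    apply integral_mono hZa.integrable_sq hDint
    intro ω
    have hdiff : Z ω - a = ∑ j, (n * u j) * (G ω j - M j) := by
      simp only [hZdef, hadef, dotProduct, Pi.smul_apply, smul_eq_mul, mul_sub,
        Finset.sum_sub_distrib]
      congr 1
      exact Finset.sum_congr rfl fun j _ => by ring
    dsimp only
    rw [hdiff]
    calc (∑ j, (n * u j) * (G ω j - M j)) ^ 2
        ≤ (∑ j, (n * u j) ^ 2) * ∑ j, (G ω j - M j) ^ 2 :=
          sum_mul_sq_le_sq_mul_sq _ _ _
      _ = ∑ j, (G ω j - M j) ^ 2 := by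
          rw [show ∑ j, (n * u j) ^ 2 = n ^ 2 * S by
            rw [hSdef, Finset.mul_sum]; exact Finset.sum_congr rfl fun j _ => by ring]
          rw [hn2, one_mul]
  rw [hevent]
  exact cantelli_aux ν Z hZ a V ha hVar

/-- Generalization bound via population within-class variance: for a `K`-class
classifier `f(x) = W g(x)` with rows `w₁,…,w_K` (pairwise distinct), the
misclassification probability (ties counted as errors) is at most
`Σ_c p_Y(c) Σ_{k≠c} (1 + max{⟨μ_c, (w_c−w_k)/‖w_c−w_k‖⟩, 0}² / V_c)⁻¹`,
where `μ_c = E[g(X) | Y=c]` and `V_c = E[‖g(X) − μ_c‖² | Y=c]`. -/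
theorem generalization_bound_within_class_variance {Ω : Type*} [MeasurableSpace Ω]
    (μ : Measure Ω) [IsProbabilityMeasure μ] {d m K : ℕ}
    (X : Ω → Fin d → ℝ) (Y : Ω → Fin K)
    (hX : Measurable X) (hY : Measurable Y)
    (g : (Fin d → ℝ) → Fin m → ℝ) (hg : Measurable g)
    (hgL2 : ∀ c : Fin K, ∀ j : Fin m,
      MemLp (fun ω => g (X ω) j) 2 (μ[|{ω | Y ω = c}]))
    (w : Fin K → Fin m → ℝ) (hw : ∀ c k : Fin K, k ≠ c → w c ≠ w k)
    (M : Fin K → Fin m → ℝ)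
    (hM : ∀ c j, M c j = ∫ ω, g (X ω) j ∂(μ[|{ω | Y ω = c}]))
    (V : Fin K → ℝ)
    (hV : ∀ c, V c = ∫ ω, ∑ j, (g (X ω) j - M c j) ^ 2 ∂(μ[|{ω | Y ω = c}])) :
    (μ {ω | ∃ k, k ≠ Y ω ∧ w (Y ω) ⬝ᵥ g (X ω) ≤ w k ⬝ᵥ g (X ω)}).toReal ≤
      ∑ c : Fin K, (μ {ω | Y ω = c}).toReal *
        ∑ k ∈ univ \ {c},
          (1 + max (M c ⬝ᵥ ((Real.sqrt (∑ j, (w c j - w k j) ^ 2))⁻¹ • (w c - w k))) 0 ^ 2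
              / V c)⁻¹ := by
  classical
  set s : Fin K → Set Ω := fun c => {ω | Y ω = c} with hsdef
  set A : Fin K → Fin K → Set Ω :=
    fun c k => {ω | w c ⬝ᵥ g (X ω) ≤ w k ⬝ᵥ g (X ω)} with hAdef
  have hsmeas : ∀ c, MeasurableSet (s c) := fun c => hY (measurableSet_singleton c)
  -- union bound
  have hsub : {ω | ∃ k, k ≠ Y ω ∧ w (Y ω) ⬝ᵥ g (X ω) ≤ w k ⬝ᵥ g (X ω)} ⊆
      ⋃ c : Fin K, ⋃ k ∈ Finset.univ \ {c}, s c ∩ A c k := by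
    rintro ω ⟨k, hk, hle⟩
    refine Set.mem_iUnion.mpr ⟨Y ω, Set.mem_iUnion₂.mpr ⟨k, ?_, rfl, hle⟩⟩
    simp [Finset.mem_sdiff, hk]
  have hUB : μ {ω | ∃ k, k ≠ Y ω ∧ w (Y ω) ⬝ᵥ g (X ω) ≤ w k ⬝ᵥ g (X ω)} ≤
      ∑ c : Fin K, ∑ k ∈ Finset.univ \ {c}, μ (s c ∩ A c k) :=
    (measure_mono hsub).trans <| (measure_iUnion_fintype_le _ _).trans <|
      Finset.sum_le_sum fun c _ => measure_biUnion_finset_le _ _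
  have h1 : (μ {ω | ∃ k, k ≠ Y ω ∧ w (Y ω) ⬝ᵥ g (X ω) ≤ w k ⬝ᵥ g (X ω)}).toReal ≤
      ∑ c : Fin K, ∑ k ∈ Finset.univ \ {c}, (μ (s c ∩ A c k)).toReal := by
    have hne : (∑ c : Fin K, ∑ k ∈ Finset.univ \ {c}, μ (s c ∩ A c k)) ≠ ⊤ :=
      (ENNReal.sum_lt_top.mpr fun c _ =>
        ENNReal.sum_lt_top.mpr fun k _ => measure_lt_top μ _).ne
    refine (ENNReal.toReal_mono hne hUB).trans (le_of_eq ?_)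
    rw [ENNReal.toReal_sum fun c _ => ?_]
    · exact Finset.sum_congr rfl fun c _ =>
        ENNReal.toReal_sum fun k _ => measure_ne_top μ _
    · exact (ENNReal.sum_lt_top.mpr fun k _ => measure_lt_top μ _).ne
  refine h1.trans (Finset.sum_le_sum fun c _ => ?_)
  rw [Finset.mul_sum]
  refine Finset.sum_le_sum fun k hk => ?_
  have hck : k ≠ c := by simpa [Finset.mem_sdiff] using hk
  by_cases h0 : μ (s c) = 0
  · have hz : μ (s c ∩ A c k) = 0 := measure_mono_null Set.inter_subset_left h0
    rw [hz, h0]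
    simp
  · haveI : IsProbabilityMeasure (μ[|s c]) := cond_isProbabilityMeasure h0
    have hu0 : w c - w k ≠ 0 := sub_ne_zero_of_ne (hw c k hck)
    have hb := pair_bound (μ[|s c]) (fun ω => g (X ω)) (hgL2 c) (w c - w k) hu0
      (M c) (hM c) (V c) (hV c)
    have hset : {ω | (w c - w k) ⬝ᵥ g (X ω) ≤ 0} = A c k := by
      ext ω
      simp [hAdef, sub_dotProduct, sub_nonpos]
    have hsum : (∑ j, (w c - w k) j ^ 2) = ∑ j, (w c j - w k j) ^ 2 := by
      simp [Pi.sub_apply]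
    rw [hset, hsum] at hb
    have hcond : μ (s c ∩ A c k) = μ (s c) * (μ[|s c]) (A c k) := by
      rw [cond_apply (hsmeas c), ← mul_assoc,
        ENNReal.mul_inv_cancel h0 (measure_ne_top μ _), one_mul]
    rw [hcond, ENNReal.toReal_mul]
    exact mul_le_mul_of_nonneg_left hb ENNReal.toReal_nonneg
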